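/- Let σ : ℝ → ℝ be a bounded measurable sigmoidal function, i.e., lim_{t→−∞} σ(t) = 0 and lim_{t→+∞} σ(t) = 1. There exists a constant C > 0 (depending only on σ) such that for every R > 0, every L-Lipschitz function f : [−R,R] → ℝ, and every integer n ≥ 1, there exist real parameters a, α_1,…,α_n, β_1,…,β_n, b_1,…,b_n such that sup_{x ∈ [−R,R]} |f(x) − (∑_{i=1}^n α_i·σ(β_i·x − b_i) − a)| ≤ C·L·R/n. -/
import Mathlib


open Set Filter

/-- For a bounded measurable sigmoidal activation `σ` (i.e. `σ(t) → 0` as `t → −∞` and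
`σ(t) → 1` as `t → +∞`), there is a constant `C > 0` (depending only on `σ`) such that every
`L`-Lipschitz function `f : [−R,R] → ℝ` can be approximated on `[−R,R]`, within `C·L·R/n`
in sup-norm, by a one-hidden-layer network `∑_{i=1}^n αᵢ·σ(βᵢ·x − bᵢ) − a`. -/
theorem sigmoidal_network_approx_lipschitz
    (σ : ℝ → ℝ) (hmeas : Measurable σ) (hbdd : ∃ M : ℝ, ∀ t : ℝ, |σ t| ≤ M)
    (h0 : Tendsto σ atBot (nhds 0)) (h1 : Tendsto σ atTop (nhds 1)) :
    ∃ C : ℝ, 0 < C ∧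
      ∀ (R L : ℝ), 0 < R →
        ∀ f : ℝ → ℝ,
          (∀ x ∈ Icc (-R) R, ∀ y ∈ Icc (-R) R, |f x - f y| ≤ L * |x - y|) →
          ∀ n : ℕ, 1 ≤ n →
            ∃ (a : ℝ) (α β b : Fin n → ℝ),
              ∀ x ∈ Icc (-R) R,
                |f x - ((∑ i, α i * σ (β i * x - b i)) - a)| ≤ C * L * R / n := by
  obtain ⟨M, hM⟩ := hbdd
  have hM0 : 0 ≤ M := (abs_nonneg _).trans (hM 0)
  refine ⟨4*M + 10, by linarith, ?_⟩
  intro R L hR f hf n hn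
  have hL : 0 ≤ L := by
    have h2 := hf R ⟨by linarith, le_refl R⟩ (-R) ⟨le_refl _, by linarith⟩
    have h3 : |R - -R| = 2*R := by rw [abs_of_pos] <;> linarith
    rw [h3] at h2
    nlinarith [abs_nonneg (f R - f (-R))]
  have hn0 : 0 < n := hn
  have hn' : (0:ℝ) < n := by exact_mod_cast hn0
  set h : ℝ := 2*R/(n:ℝ) with hhdef
  have hhpos : 0 < h := by rw [hhdef]; positivity
  -- thresholds for the tails of σ
  have e1 : ∀ᶠ t in atTop, |σ t - 1| ≤ 1/(n:ℝ) := by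
    have := Metric.tendsto_nhds.mp h1 (1/(n:ℝ)) (by positivity)
    filter_upwards [this] with t ht
    rw [Real.dist_eq] at ht; linarith
  have e0 : ∀ᶠ t in atBot, |σ t| ≤ 1/(n:ℝ) := by
    have := Metric.tendsto_nhds.mp h0 (1/(n:ℝ)) (by positivity)
    filter_upwards [this] with t ht
    rw [Real.dist_eq, sub_zero] at ht; linarith
  obtain ⟨T₁, hT₁⟩ := eventually_atTop.mp e1
  obtain ⟨T₀, hT₀⟩ := eventually_atBot.mp e0
  set T : ℝ := max 1 (max T₁ (-T₀)) with hTdef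
  have hT1 : (1:ℝ) ≤ T := le_max_left _ _
  have hTT₁ : T₁ ≤ T := le_trans (le_max_left _ _) (le_max_right _ _)
  have hTT₀ : -T₀ ≤ T := le_trans (le_max_right _ _) (le_max_right _ _)
  have hTpos : (0:ℝ) < T := lt_of_lt_of_le one_pos hT1
  set β : ℝ := T / h with hβdef
  have hβpos : 0 < β := by rw [hβdef]; positivity
  have hβh : β * h = T := by rw [hβdef]; field_simp
  set p : ℕ → ℝ := fun i => -R + i * h with hpdef
  have hnh : (n:ℝ) * h = 2*R := by rw [hhdef]; field_simp
  have hpmem : ∀ i : ℕ, i ≤ n → p i ∈ Icc (-R) R := by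
    intro i hi
    have hi' : (i:ℝ) ≤ n := by exact_mod_cast hi
    have hi0 : (0:ℝ) ≤ (i:ℝ) := Nat.cast_nonneg i
    constructor
    · simp only [hpdef]
      nlinarith [mul_nonneg hi0 hhpos.le]
    · simp only [hpdef]
      nlinarith [mul_le_mul_of_nonneg_right hi' hhpos.le]
  have hstep : ∀ i : ℕ, p (i+1) - p i = h := by
    intro i; simp only [hpdef]; push_cast; ring
  have hpmono : ∀ a b : ℕ, a ≤ b → p a ≤ p b := by
    intro a b hab
    have hab' : (a:ℝ) ≤ (b:ℝ) := by exact_mod_cast hab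
    simp only [hpdef]
    nlinarith [mul_le_mul_of_nonneg_right hab' hhpos.le]
  refine ⟨-(f (-R)), fun i => f (p ((i:ℕ)+1)) - f (p (i:ℕ)), fun _ => β,
    fun i => β * p ((i:ℕ)+1), ?_⟩
  intro x hx
  obtain ⟨hx1, hx2⟩ := hx
  show |f x - ((∑ i : Fin n, (f (p ((i:ℕ)+1)) - f (p (i:ℕ))) * σ (β * x - β * p ((i:ℕ)+1)))
      - -(f (-R)))| ≤ (4*M + 10) * L * R / (n:ℝ)
  set k : ℕ := min (n-1) ⌊(x+R)/h⌋₊ with hkdef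
  have hkn1 : k ≤ n - 1 := min_le_left _ _
  have hkn : k + 1 ≤ n := by omega
  have hpkx : p k ≤ x := by
    have hc1 : (k:ℝ) ≤ (⌊(x+R)/h⌋₊ : ℝ) := by exact_mod_cast min_le_right (n-1) _
    have hc2 : (⌊(x+R)/h⌋₊ : ℝ) ≤ (x+R)/h := Nat.floor_le (div_nonneg (by linarith) hhpos.le)
    have h5 : (k:ℝ) * h ≤ x + R := (le_div_iff₀ hhpos).mp (hc1.trans hc2)
    simp only [hpdef]; linarith
  have hxpk1 : x ≤ p (k+1) := by
    rcases le_or_gt (⌊(x+R)/h⌋₊) (n-1) with hc | hc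
    · have hkeq : k = ⌊(x+R)/h⌋₊ := min_eq_right hc
      have h4 : (x+R)/h < (⌊(x+R)/h⌋₊ : ℝ) + 1 := Nat.lt_floor_add_one _
      have h4' : x + R < ((⌊(x+R)/h⌋₊ : ℝ) + 1) * h := (div_lt_iff₀ hhpos).mp h4
      have hcast : ((k:ℕ):ℝ) = (⌊(x+R)/h⌋₊ : ℝ) := by rw [hkeq]
      rw [← hcast] at h4'
      simp only [hpdef]; push_cast; linarith
    · have hkeq : k + 1 = n := by omega
      rw [hkeq]
      simp only [hpdef]; linarith
  have hpkIcc : p k ∈ Icc (-R) R := hpmem k (by omega)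
  set χ : ℕ → ℝ := fun i => if i < k then 1 else 0 with hχdef
  have tel : ∑ i : Fin n, (f (p ((i:ℕ)+1)) - f (p (i:ℕ))) * χ (i:ℕ) = f (p k) - f (-R) := by
    rw [Fin.sum_univ_eq_sum_range (fun i => (f (p (i+1)) - f (p i)) * χ i) n]
    rw [← Finset.sum_subset (Finset.range_subset_range.mpr (show k ≤ n by omega))
        (fun i _ hi => by
          have hni : ¬ i < k := by simpa using hi
          simp [hχdef, hni])]
    have hcong : ∑ i ∈ Finset.range k, (f (p (i+1)) - f (p i)) * χ i
        = ∑ i ∈ Finset.range k, (f (p (i+1)) - f (p i)) := by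
      refine Finset.sum_congr rfl (fun i hi => ?_)
      have : i < k := Finset.mem_range.mp hi
      simp [hχdef, this]
    rw [hcong, Finset.sum_range_sub (fun i => f (p i)) k]
    have : p 0 = -R := by simp [hpdef]
    rw [this]
  have key : f x - ((∑ i : Fin n, (f (p ((i:ℕ)+1)) - f (p (i:ℕ))) * σ (β * x - β * p ((i:ℕ)+1)))
        - -(f (-R)))
      = (f x - f (p k)) - ∑ i : Fin n,
        (f (p ((i:ℕ)+1)) - f (p (i:ℕ))) * (σ (β * x - β * p ((i:ℕ)+1)) - χ (i:ℕ)) := by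
    have expand : ∑ i : Fin n,
          (f (p ((i:ℕ)+1)) - f (p (i:ℕ))) * (σ (β * x - β * p ((i:ℕ)+1)) - χ (i:ℕ))
        = (∑ i : Fin n, (f (p ((i:ℕ)+1)) - f (p (i:ℕ))) * σ (β * x - β * p ((i:ℕ)+1)))
          - ∑ i : Fin n, (f (p ((i:ℕ)+1)) - f (p (i:ℕ))) * χ (i:ℕ) := by
      rw [← Finset.sum_sub_distrib]
      exact Finset.sum_congr rfl (fun i _ => by ring)
    rw [expand, tel]; ring
  have hΔbd : ∀ i : Fin n, |f (p ((i:ℕ)+1)) - f (p (i:ℕ))| ≤ L * h := by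
    intro i
    have h1' := hf (p ((i:ℕ)+1)) (hpmem _ (by omega)) (p (i:ℕ)) (hpmem _ (by omega))
    have h2' : |p ((i:ℕ)+1) - p (i:ℕ)| = h := by rw [hstep, abs_of_pos hhpos]
    rw [h2'] at h1'
    exact h1'
  set e : ℕ → ℝ := fun i => if i = k-1 ∨ i = k then M+1 else 1/(n:ℝ) with hedef
  have hterm : ∀ i : Fin n,
      |(f (p ((i:ℕ)+1)) - f (p (i:ℕ))) * (σ (β * x - β * p ((i:ℕ)+1)) - χ (i:ℕ))|
        ≤ (L*h) * e (i:ℕ) := by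
    intro i
    rw [abs_mul]
    refine mul_le_mul (hΔbd i) ?_ (abs_nonneg _) (mul_nonneg hL hhpos.le)
    by_cases hnear : (i:ℕ) = k-1 ∨ (i:ℕ) = k
    · simp only [hedef]
      rw [if_pos hnear]
      have hσ := hM (β * x - β * p ((i:ℕ)+1))
      have hχb : |χ (i:ℕ)| ≤ 1 := by
        simp only [hχdef]; split <;> norm_num
      calc |σ (β * x - β * p ((i:ℕ)+1)) - χ (i:ℕ)|
          ≤ |σ (β * x - β * p ((i:ℕ)+1))| + |χ (i:ℕ)| := abs_sub _ _
        _ ≤ M + 1 := by linarith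
    · push_neg at hnear
      obtain ⟨hne1, hne2⟩ := hnear
      simp only [hedef]
      rw [if_neg (by push_neg; exact ⟨hne1, hne2⟩)]
      by_cases hik : (i:ℕ) < k
      · have hik' : (i:ℕ) + 2 ≤ k := by omega
        have hχ1 : χ (i:ℕ) = 1 := if_pos hik
        have hmono : p ((i:ℕ)+2) ≤ p k := hpmono _ _ hik'
        have hstep' : p ((i:ℕ)+1) + h = p ((i:ℕ)+2) := by
          have := hstep ((i:ℕ)+1); linarith
        have hxd : h ≤ x - p ((i:ℕ)+1) := by linarith
        have harg : T₁ ≤ β * x - β * p ((i:ℕ)+1) := by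
          have h6 := mul_le_mul_of_nonneg_left hxd hβpos.le
          have h7 : β * (x - p ((i:ℕ)+1)) = β * x - β * p ((i:ℕ)+1) := by ring
          linarith [hβh, hTT₁]
        rw [hχ1]
        exact hT₁ _ harg
      · have hik' : k + 1 ≤ (i:ℕ) := by omega
        have hχ0 : χ (i:ℕ) = 0 := if_neg hik
        have hmono : p (k+2) ≤ p ((i:ℕ)+1) := hpmono _ _ (by omega)
        have hstep' : p (k+1) + h = p (k+2) := by
          have := hstep (k+1); linarith
        have hxd : x - p ((i:ℕ)+1) ≤ -h := by linarith
        have harg : β * x - β * p ((i:ℕ)+1) ≤ T₀ := by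
          have h6 := mul_le_mul_of_nonneg_left hxd hβpos.le
          have h7 : β * (x - p ((i:ℕ)+1)) = β * x - β * p ((i:ℕ)+1) := by ring
          have h8 : β * (-h) = -T := by rw [← hβh]; ring
          linarith [hTT₀]
        rw [hχ0, sub_zero]
        exact hT₀ _ harg
  have hesum : ∑ i : Fin n, e (i:ℕ) ≤ 2*M + 3 := by
    have hle : ∀ i ∈ (Finset.univ : Finset (Fin n)), e ((i : Fin n):ℕ) ≤
        (if ((i : Fin n):ℕ) = k-1 then (M+1) else 0)
        + (if ((i : Fin n):ℕ) = k then (M+1) else 0) + 1/(n:ℝ) := by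
      intro i _
      have t1 : (0:ℝ) ≤ if ((i : Fin n):ℕ) = k-1 then (M+1) else 0 := by
        split <;> linarith
      have t2 : (0:ℝ) ≤ if ((i : Fin n):ℕ) = k then (M+1) else 0 := by
        split <;> linarith
      have t3 : (0:ℝ) < 1/(n:ℝ) := by positivity
      simp only [hedef]
      by_cases hc : ((i : Fin n):ℕ) = k-1 ∨ ((i : Fin n):ℕ) = k
      · rw [if_pos hc]
        rcases hc with hc | hc
        · rw [if_pos hc] at t1 ⊢; linarith
        · rw [if_pos hc] at t2 ⊢; linarith
      · push_neg at hc
        rw [if_neg (by push_neg; exact hc), if_neg hc.1, if_neg hc.2]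
        linarith
    have h7 : ∑ i : Fin n, (if ((i : Fin n):ℕ) = k-1 then (M+1:ℝ) else 0) ≤ M+1 := by
      rw [Fin.sum_univ_eq_sum_range (fun j => if j = k-1 then (M+1:ℝ) else 0) n]
      rw [Finset.sum_ite_eq' (Finset.range n) (k-1) (fun _ => (M+1:ℝ))]
      split <;> linarith
    have h8 : ∑ i : Fin n, (if ((i : Fin n):ℕ) = k then (M+1:ℝ) else 0) ≤ M+1 := by
      rw [Fin.sum_univ_eq_sum_range (fun j => if j = k then (M+1:ℝ) else 0) n]
      rw [Finset.sum_ite_eq' (Finset.range n) k (fun _ => (M+1:ℝ))]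
      split <;> linarith
    have h9 : ∑ _i : Fin n, (1/(n:ℝ)) = 1 := by
      rw [Finset.sum_const, Finset.card_univ, Fintype.card_fin, nsmul_eq_mul]
      field_simp
    calc ∑ i : Fin n, e (i:ℕ)
        ≤ ∑ i : Fin n, ((if ((i : Fin n):ℕ) = k-1 then (M+1:ℝ) else 0)
          + (if ((i : Fin n):ℕ) = k then (M+1:ℝ) else 0) + 1/(n:ℝ)) :=
        Finset.sum_le_sum hle
      _ = (∑ i : Fin n, (if ((i : Fin n):ℕ) = k-1 then (M+1:ℝ) else 0))
          + (∑ i : Fin n, (if ((i : Fin n):ℕ) = k then (M+1:ℝ) else 0))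
          + ∑ _i : Fin n, (1/(n:ℝ)) := by
        rw [Finset.sum_add_distrib, Finset.sum_add_distrib]
      _ ≤ (M+1) + (M+1) + 1 := by rw [h9]; linarith [h7, h8]
      _ = 2*M + 3 := by ring
  have hA : |f x - f (p k)| ≤ L * h := by
    have h1' := hf x ⟨hx1, hx2⟩ (p k) hpkIcc
    have h2' : |x - p k| ≤ h := by
      rw [abs_of_nonneg (by linarith)]
      have hs := hstep k
      linarith
    calc |f x - f (p k)| ≤ L * |x - p k| := h1'
      _ ≤ L * h := mul_le_mul_of_nonneg_left h2' hL
  have hB : |∑ i : Fin n,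
        (f (p ((i:ℕ)+1)) - f (p (i:ℕ))) * (σ (β * x - β * p ((i:ℕ)+1)) - χ (i:ℕ))|
      ≤ (L*h) * (2*M+3) := by
    calc |∑ i : Fin n,
          (f (p ((i:ℕ)+1)) - f (p (i:ℕ))) * (σ (β * x - β * p ((i:ℕ)+1)) - χ (i:ℕ))|
        ≤ ∑ i : Fin n,
          |(f (p ((i:ℕ)+1)) - f (p (i:ℕ))) * (σ (β * x - β * p ((i:ℕ)+1)) - χ (i:ℕ))| :=
        Finset.abs_sum_le_sum_abs _ _
      _ ≤ ∑ i : Fin n, (L*h) * e (i:ℕ) := Finset.sum_le_sum (fun i _ => hterm i)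
      _ = (L*h) * ∑ i : Fin n, e (i:ℕ) := by rw [Finset.mul_sum]
      _ ≤ (L*h) * (2*M+3) :=
        mul_le_mul_of_nonneg_left hesum (mul_nonneg hL hhpos.le)
  have hfinal : L*h + (L*h) * (2*M+3) ≤ (4*M + 10) * L * R / (n:ℝ) := by
    have heq : L*h + (L*h) * (2*M+3) = ((4*M+8)*L*R)/(n:ℝ) := by rw [hhdef]; ring
    rw [heq, div_le_div_iff₀ hn' hn']
    have hid : (4*M+10)*L*R*(n:ℝ) - (4*M+8)*L*R*(n:ℝ) = 2*(L*R*(n:ℝ)) := by ring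
    linarith [mul_nonneg (mul_nonneg hL hR.le) hn'.le, hid]
  calc |f x - ((∑ i : Fin n, (f (p ((i:ℕ)+1)) - f (p (i:ℕ))) * σ (β * x - β * p ((i:ℕ)+1)))
        - -(f (-R)))|
      = |(f x - f (p k)) - ∑ i : Fin n,
        (f (p ((i:ℕ)+1)) - f (p (i:ℕ))) * (σ (β * x - β * p ((i:ℕ)+1)) - χ (i:ℕ))| := by
        rw [key]
    _ ≤ |f x - f (p k)| + |∑ i : Fin n,
        (f (p ((i:ℕ)+1)) - f (p (i:ℕ))) * (σ (β * x - β * p ((i:ℕ)+1)) - χ (i:ℕ))| :=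
        abs_sub _ _
    _ ≤ L*h + (L*h) * (2*M+3) := add_le_add hA hB
    _ ≤ (4*M + 10) * L * R / (n:ℝ) := hfinal
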